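/- Let F* be the set of all φ_A-implicational walks and F the set of all φ_A-conflicting walks for a set of 0/1/all constraints C and partial assignment φ_A. Then the pair (F, F*) is nice: (1) F ⊆ F*; (2) F* is closed under taking prefixes; (3) the relation P ≡ Q (defined for P, Q ∈ F* ending at the same vertex by P∘Q⁻¹ ∉ F) is an equivalence relation; (4) for equivalent walks P ≡ Q ending at u and any edge uv, P∘uv ∈ F* iff Q∘uv ∈ F*. -/

import Mathlib

/-- A 0/1/all constraint between two domains: either a permutation
constraint (given by a bijection) or a two-fan constraint `(φ(u)=a) ∨ (φ(v)=b)`. -/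
inductive ZOA (α β : Type) : Type where
  | perm (π : α ≃ β)
  | twofan (a : α) (b : β)

-- Unit propagation: fixing the first variable to `p`, the set of allowed values of the
-- second variable is either everything (`none`, i.e. "all") or a singleton (`some q`).
open Classical in
noncomputable def ZOA.propg {α β : Type} : ZOA α β → α → Option β
  | .perm π, p => some (π p)
  | .twofan a b, p => if p = a then none else some b

/-- The reversed constraint on the opposite directed edge. -/
def ZOA.rev {α β : Type} : ZOA α β → ZOA β α
  | .perm π => .perm π.symm
  | .twofan a b => .twofan b a

/-- Satisfaction of a 0/1/all constraint by a pair of values. -/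
def ZOA.Sat {α β : Type} : ZOA α β → α → β → Prop
  | .perm π, x, y => π x = y
  | .twofan a b, x, y => x = a ∨ y = b

/-- Walks in the primal graph given by an adjacency relation. -/
inductive Wk {V : Type} (adj : V → V → Prop) : V → V → Type where
  | nil (v : V) : Wk adj v v
  | cons {u v w : V} (h : adj u v) (p : Wk adj v w) : Wk adj u w

/-- Concatenation of walks. -/
def Wk.app {V : Type} {adj : V → V → Prop} :
    ∀ {u v w : V}, Wk adj u v → Wk adj v w → Wk adj u w
  | _, _, _, .nil _, q => q
  | _, _, _, .cons h p, q => .cons h (Wk.app p q)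

/-- Reversal of a walk (uses symmetry of the adjacency relation). -/
def Wk.rev {V : Type} {adj : V → V → Prop} (hs : ∀ u v : V, adj u v → adj v u) :
    ∀ {u v : V}, Wk adj u v → Wk adj v u
  | _, _, .nil x => .nil x
  | _, _, .cons h p => Wk.app (Wk.rev hs p) (.cons (hs _ _ h) (.nil _))

/-- The list of vertices of a walk, in order (with multiplicity). -/
def Wk.support {V : Type} {adj : V → V → Prop} : ∀ {u w : V}, Wk adj u w → List V
  | _, _, .nil x => [x]
  | u, _, .cons _ p => u :: p.support

/-- Appending a single edge at the end of a walk. -/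
def Wk.ext {V : Type} {adj : V → V → Prop} {s u t : V}
    (P : Wk adj s u) (h : adj u t) : Wk adj s t :=
  P.app (.cons h (.nil t))

/-- Unit propagation along a walk: `none` means "all" (no restriction), and "all" is
absorbing. -/
noncomputable def runW {V : Type} {adj : V → V → Prop} {D : V → Type}
    (C : ∀ u v : V, adj u v → ZOA (D u) (D v)) :
    ∀ {u w : V}, Wk adj u w → D u → Option (D w)
  | _, _, .nil _, p => some p
  | _, _, .cons h q, p => ((C _ _ h).propg p).bind (runW C q)

/-- A walk is `φ_A`-implicational if it starts in `A` and unit propagation along it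
from the assigned value yields a value (not "all"). -/
def Impl {V : Type} {adj : V → V → Prop} {D : V → Type}
    (C : ∀ u v : V, adj u v → ZOA (D u) (D v)) (A : Set V) (φ : ∀ v ∈ A, D v)
    {s t : V} (W : Wk adj s t) : Prop :=
  ∃ hs : s ∈ A, (runW C W (φ s hs)).isSome

/-- A walk is `φ_A`-conflicting if it is implicational, ends in `A`, and its implied
value differs from the assigned value of its endpoint. -/
def Confl {V : Type} {adj : V → V → Prop} {D : V → Type}
    (C : ∀ u v : V, adj u v → ZOA (D u) (D v)) (A : Set V) (φ : ∀ v ∈ A, D v)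
    {s t : V} (W : Wk adj s t) : Prop :=
  ∃ (hs : s ∈ A) (ht : t ∈ A) (q : D t),
    runW C W (φ s hs) = some q ∧ q ≠ φ t ht

/-- A pair `(F, F*)` of sets of walks is *nice* if: `F ⊆ F*`; `F*` is closed under
taking prefixes; the relation `P ≡ Q` (for `P, Q ∈ F*` ending at the same vertex,
defined by `P ∘ Q⁻¹ ∉ F`) is an equivalence relation; and equivalent walks can be
extended by an edge inside `F*` in the same ways. -/
structure IsNice {V : Type} {adj : V → V → Prop}
    (hs : ∀ u v : V, adj u v → adj v u)
    (F Fstar : ∀ u v : V, Wk adj u v → Prop) : Prop where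
  sub : ∀ u v (W : Wk adj u v), F u v W → Fstar u v W
  prefix_closed : ∀ u v w (P : Wk adj u v) (Q : Wk adj v w),
    Fstar u w (P.app Q) → Fstar u v P
  refl : ∀ u t (P : Wk adj u t), Fstar u t P → ¬ F u u (P.app (P.rev hs))
  symm : ∀ u v t (P : Wk adj u t) (Q : Wk adj v t), Fstar u t P → Fstar v t Q →
    ¬ F u v (P.app (Q.rev hs)) → ¬ F v u (Q.app (P.rev hs))
  trans : ∀ u v w t (P : Wk adj u t) (Q : Wk adj v t) (R : Wk adj w t),
    Fstar u t P → Fstar v t Q → Fstar w t R →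
    ¬ F u v (P.app (Q.rev hs)) → ¬ F v w (Q.app (R.rev hs)) →
    ¬ F u w (P.app (R.rev hs))
  ext : ∀ u v t t' (P : Wk adj u t) (Q : Wk adj v t) (h : adj t t'),
    Fstar u t P → Fstar v t Q → ¬ F u v (P.app (Q.rev hs)) →
    (Fstar u t' (P.ext h) ↔ Fstar v t' (Q.ext h))

section Aux

variable {V : Type} {adj : V → V → Prop} {D : V → Type}

theorem ZOA.propg_rev_of_eq {α β : Type} (e : ZOA α β) {p : α} {q : β}
    (h : e.propg p = some q) :
    e.rev.propg q = none ∨ e.rev.propg q = some p := by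
  classical
  cases e with
  | perm π =>
    simp only [ZOA.propg, Option.some.injEq] at h
    right
    simp [ZOA.propg, ZOA.rev, ← h]
  | twofan a b =>
    by_cases hp : p = a
    · simp [ZOA.propg, hp] at h
    · simp only [ZOA.propg, if_neg hp, Option.some.injEq] at h
      left
      simp [ZOA.propg, ZOA.rev, ← h]

theorem ZOA.propg_rev_of_ne {α β : Type} (e : ZOA α β) {p : α} {q x : β}
    (h : e.propg p = some q) (hx : x ≠ q) :
    ∃ y, e.rev.propg x = some y ∧ y ≠ p := by
  classical
  cases e with
  | perm π =>
    simp only [ZOA.propg, Option.some.injEq] at h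
    refine ⟨π.symm x, rfl, fun hc => hx ?_⟩
    rw [← h, ← hc, Equiv.apply_symm_apply]
  | twofan a b =>
    by_cases hp : p = a
    · simp [ZOA.propg, hp] at h
    · simp only [ZOA.propg, if_neg hp, Option.some.injEq] at h
      refine ⟨a, ?_, fun hc => hp hc.symm⟩
      have hxb : x ≠ b := fun hc => hx (hc.trans h)
      simp [ZOA.propg, ZOA.rev, if_neg hxb]

theorem runW_app (C : ∀ u v : V, adj u v → ZOA (D u) (D v))
    {u v w : V} (P : Wk adj u v) (Q : Wk adj v w) (p : D u) :
    runW C (P.app Q) p = (runW C P p).bind (runW C Q) := by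
  induction P with
  | nil => simp [Wk.app, runW]
  | cons h P ih =>
    simp only [Wk.app, runW]
    cases (C _ _ h).propg p with
    | none => simp
    | some m => simp [ih]

theorem runW_rev_of_eq (hsym : ∀ u v : V, adj u v → adj v u)
    (C : ∀ u v : V, adj u v → ZOA (D u) (D v))
    (hcompat : ∀ u v (h : adj u v), C v u (hsym u v h) = (C u v h).rev)
    {u w : V} (W : Wk adj u w) {p : D u} {q : D w}
    (h : runW C W p = some q) :
    runW C (W.rev hsym) q = none ∨ runW C (W.rev hsym) q = some p := by
  induction W with
  | nil =>
    simp only [runW, Option.some.injEq] at h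
    right; simp [Wk.rev, runW, h]
  | cons he P ih =>
    simp only [runW] at h
    cases hm : (C _ _ he).propg p with
    | none => rw [hm] at h; simp at h
    | some m =>
      rw [hm] at h
      simp only [Option.bind_some] at h
      have hrec := ih h
      simp only [Wk.rev, runW_app]
      cases hrec with
      | inl h0 => left; simp [h0]
      | inr h1 =>
        rw [h1]
        simp only [Option.bind_some, runW]
        rw [hcompat _ _ he]
        rcases ZOA.propg_rev_of_eq _ hm with h2 | h2 <;> [left; right] <;> simp [h2]

theorem runW_rev_of_ne (hsym : ∀ u v : V, adj u v → adj v u)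
    (C : ∀ u v : V, adj u v → ZOA (D u) (D v))
    (hcompat : ∀ u v (h : adj u v), C v u (hsym u v h) = (C u v h).rev)
    {u w : V} (W : Wk adj u w) {p : D u} {q x : D w}
    (h : runW C W p = some q) (hx : x ≠ q) :
    ∃ y, runW C (W.rev hsym) x = some y ∧ y ≠ p := by
  induction W with
  | nil =>
    simp only [runW, Option.some.injEq] at h
    exact ⟨x, rfl, h ▸ hx⟩
  | cons he P ih =>
    simp only [runW] at h
    cases hm : (C _ _ he).propg p with
    | none => rw [hm] at h; simp at h
    | some m =>
      rw [hm] at h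
      simp only [Option.bind_some] at h
      obtain ⟨y', hy', hy'm⟩ := ih h hx
      obtain ⟨y, hy, hyp⟩ := ZOA.propg_rev_of_ne _ hm hy'm
      refine ⟨y, ?_, hyp⟩
      simp only [Wk.rev, runW_app, hy', Option.bind_some, runW]
      rw [hcompat _ _ he, hy]
      simp

/-- If `P` and `Q` are implicational walks ending at the same vertex and
`P ∘ Q⁻¹` is not conflicting, the implied values agree. -/
theorem implied_agree (hsym : ∀ u v : V, adj u v → adj v u)
    (C : ∀ u v : V, adj u v → ZOA (D u) (D v))
    (hcompat : ∀ u v (h : adj u v), C v u (hsym u v h) = (C u v h).rev)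
    (A : Set V) (φ : ∀ v ∈ A, D v)
    {u v t : V} (P : Wk adj u t) (Q : Wk adj v t)
    (hu : u ∈ A) (hv : v ∈ A) {qP qQ : D t}
    (hP : runW C P (φ u hu) = some qP) (hQ : runW C Q (φ v hv) = some qQ)
    (hnc : ¬ Confl C A φ (P.app (Q.rev hsym))) : qP = qQ := by
  by_contra hne
  obtain ⟨y, hy, hyv⟩ := runW_rev_of_ne hsym C hcompat Q hQ hne
  exact hnc ⟨hu, hv, y, by rw [runW_app, hP, Option.bind_some, hy], hyv⟩

end Aux

/-- for a set of 0/1/all constraints `C` and a partial assignment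
`φ_A`, the pair `(F, F*)` where `F` is the set of conflicting walks and `F*` the set of
implicational walks is nice. -/
theorem confl_impl_isNice
    {V : Type} {adj : V → V → Prop} {D : V → Type}
    (hsym : ∀ u v : V, adj u v → adj v u)
    (C : ∀ u v : V, adj u v → ZOA (D u) (D v))
    (hcompat : ∀ u v (h : adj u v), C v u (hsym u v h) = (C u v h).rev)
    (A : Set V) (φ : ∀ v ∈ A, D v) :
    IsNice hsym (fun u v (W : Wk adj u v) => Confl C A φ W)
      (fun u v (W : Wk adj u v) => Impl C A φ W) := by
  constructor
  · -- sub : conflicting → implicational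
    rintro u v W ⟨hu, ht, q, hq, -⟩
    exact ⟨hu, by rw [hq]; rfl⟩
  · -- prefix_closed
    rintro u v w P Q ⟨hu, hsome⟩
    refine ⟨hu, ?_⟩
    rw [runW_app] at hsome
    cases hP : runW C P (φ u hu) with
    | none => rw [hP] at hsome; simp at hsome
    | some m => rfl
  · -- refl
    rintro u t P ⟨hu, hsome⟩ ⟨hu', hu'', q, hq, hqne⟩
    obtain ⟨qP, hqP⟩ := Option.isSome_iff_exists.mp hsome
    rw [runW_app, hqP, Option.bind_some] at hq
    rcases runW_rev_of_eq hsym C hcompat P hqP with h0 | h0 <;> rw [h0] at hq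
    · exact nomatch hq
    · exact hqne (Option.some.inj hq).symm
  · -- symm
    rintro u v t P Q ⟨hu, hPs⟩ ⟨hv, hQs⟩ hnc ⟨hv', hu', p', hp', hp'ne⟩
    obtain ⟨qP, hqP⟩ := Option.isSome_iff_exists.mp hPs
    obtain ⟨qQ, hqQ⟩ := Option.isSome_iff_exists.mp hQs
    have hag : qP = qQ := implied_agree hsym C hcompat A φ P Q hu hv hqP hqQ hnc
    rw [runW_app, hqQ, Option.bind_some, ← hag] at hp'
    rcases runW_rev_of_eq hsym C hcompat P hqP with h0 | h0 <;> rw [h0] at hp'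
    · exact nomatch hp'
    · exact hp'ne (Option.some.inj hp').symm
  · -- trans
    rintro u v w t P Q R ⟨hu, hPs⟩ ⟨hv, hQs⟩ ⟨hw, hRs⟩ hncPQ hncQR
      ⟨hu', hw', r', hr', hr'ne⟩
    obtain ⟨qP, hqP⟩ := Option.isSome_iff_exists.mp hPs
    obtain ⟨qQ, hqQ⟩ := Option.isSome_iff_exists.mp hQs
    obtain ⟨qR, hqR⟩ := Option.isSome_iff_exists.mp hRs
    have h1 : qP = qQ := implied_agree hsym C hcompat A φ P Q hu hv hqP hqQ hncPQ
    have h2 : qQ = qR := implied_agree hsym C hcompat A φ Q R hv hw hqQ hqR hncQR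
    rw [runW_app, hqP, Option.bind_some, h1, h2] at hr'
    rcases runW_rev_of_eq hsym C hcompat R hqR with h0 | h0 <;> rw [h0] at hr'
    · exact nomatch hr'
    · exact hr'ne (Option.some.inj hr').symm
  · -- ext
    rintro u v t t' P Q h ⟨hu, hPs⟩ ⟨hv, hQs⟩ hnc
    obtain ⟨qP, hqP⟩ := Option.isSome_iff_exists.mp hPs
    obtain ⟨qQ, hqQ⟩ := Option.isSome_iff_exists.mp hQs
    have hag : qP = qQ := implied_agree hsym C hcompat A φ P Q hu hv hqP hqQ hnc
    constructor
    · rintro ⟨hu', hext⟩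
      refine ⟨hv, ?_⟩
      rw [Wk.ext, runW_app, hqQ, Option.bind_some]
      rw [Wk.ext, runW_app, hqP, Option.bind_some, hag] at hext
      exact hext
    · rintro ⟨hv', hext⟩
      refine ⟨hu, ?_⟩
      rw [Wk.ext, runW_app, hqP, Option.bind_some, hag]
      rw [Wk.ext, runW_app, hqQ, Option.bind_some] at hext
      exact hext
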